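/- Worst-case CVaR robust positively invariant set (Theorem 4): consider x_{t+1} = A x_t + D v_t + E w_t with spectral norm ‖A‖ < 1, Σ_w positive semidefinite, and inputs satisfying ‖v_t‖ ≤ d for all t. If r > 0 satisfies r² ≥ (1/(1 − ‖A‖)²)·( ‖D‖·d + √((1/ε)·Tr(Σ_w Eᵀ E)) )², then for every x ∈ ℝ^{n_x} with ‖x‖² ≤ r², every k ≥ 1, and every input sequence v₀, …, v_{k−1} with ‖v_τ‖ ≤ d: sup_{P ∈ M_k} CVaR_ε^P[ ‖A^k x + G_k v̄_k + H_k w̄_k‖² − r² ] ≤ 0. -/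

import Mathlib

open MeasureTheory Matrix Kronecker

/-- Spectral norm (largest singular value) of a real matrix, as the operator norm of the
induced map between Euclidean spaces. -/
noncomputable def specNorm {m n : Type*} [Fintype m] [Fintype n] [DecidableEq n]
    (A : Matrix m n ℝ) : ℝ :=
  ‖LinearMap.toContinuousLinearMap (Matrix.toEuclideanLin A)‖

/-- Conditional value-at-risk at level `ε` of the loss `L` under the measure `P`:
`CVaR_ε^P[L] = inf_β ( β + (1/ε) E_P[max (L ξ - β) 0] )`. -/
noncomputable def CVaR {ι : Type*} [Fintype ι] (ε : ℝ)
    (P : Measure (EuclideanSpace ℝ ι)) (L : EuclideanSpace ℝ ι → ℝ) : ℝ :=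
  ⨅ β : ℝ, (β + ε⁻¹ * ∫ ξ, max (L ξ - β) 0 ∂P)

/-- The set `M(S)` of Borel probability measures with zero mean and covariance `S`. -/
def MomentSet {ι : Type*} [Fintype ι] (S : Matrix ι ι ℝ) :
    Set (Measure (EuclideanSpace ℝ ι)) :=
  {P | IsProbabilityMeasure P ∧
       (∀ i, Integrable (fun ξ => ξ i) P) ∧
       (∀ i, ∫ ξ, ξ i ∂P = 0) ∧
       (∀ i j, Integrable (fun ξ => ξ i * ξ j) P) ∧
       (∀ i j, ∫ ξ, ξ i * ξ j ∂P = S i j)}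

/-- Worst-case CVaR over the moment set `M(S)`. -/
noncomputable def wcCVaR {ι : Type*} [Fintype ι] (ε : ℝ) (S : Matrix ι ι ℝ)
    (L : EuclideanSpace ℝ ι → ℝ) : ℝ :=
  ⨆ P : MomentSet S, CVaR ε (P : Measure (EuclideanSpace ℝ ι)) L

/-- The block matrix `H_t = [A^(t-1) E, A^(t-2) E, ..., E]`, viewed as a matrix acting on the
stacked disturbance vector `w̄_t = (w_0, ..., w_(t-1))` (indexed by `Fin t × Fin nw`),
so that `H_t w̄_t = Σ_k A^(t-1-k) E w_k`. -/
noncomputable def Hmat {nx nw : ℕ} (A : Matrix (Fin nx) (Fin nx) ℝ)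
    (E : Matrix (Fin nx) (Fin nw) ℝ) (t : ℕ) :
    Matrix (Fin nx) (Fin t × Fin nw) ℝ :=
  Matrix.of fun i p => (A ^ (t - 1 - (p.1 : ℕ)) * E) i p.2

/-! ### Auxiliary lemmas -/

set_option maxHeartbeats 1000000

lemma eucl_norm_sq {ι : Type*} [Fintype ι] (x : EuclideanSpace ℝ ι) :
    ‖x‖ ^ 2 = ∑ i, x i ^ 2 := by
  rw [EuclideanSpace.norm_eq, Real.sq_sqrt]
  · simp [Real.norm_eq_abs, sq_abs]
  · positivity

lemma toEuclideanLin_apply' {m n : Type*} [Fintype m] [Fintype n] [DecidableEq n]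
    (M : Matrix m n ℝ) (v : EuclideanSpace ℝ n) (i : m) :
    Matrix.toEuclideanLin M v i = ∑ p, M i p * v p := by
  simp [Matrix.toEuclideanLin_apply, Matrix.mulVec, dotProduct]

lemma specNorm_nonneg {m n : Type*} [Fintype m] [Fintype n] [DecidableEq n]
    (A : Matrix m n ℝ) : 0 ≤ specNorm A := norm_nonneg _

lemma norm_toEuclideanLin_le {m n : Type*} [Fintype m] [Fintype n] [DecidableEq n]
    (A : Matrix m n ℝ) (x : EuclideanSpace ℝ n) :
    ‖Matrix.toEuclideanLin A x‖ ≤ specNorm A * ‖x‖ :=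
  (LinearMap.toContinuousLinearMap (Matrix.toEuclideanLin A)).le_opNorm x

lemma specNorm_mul_le {m n p : Type*} [Fintype m] [Fintype n] [Fintype p]
    [DecidableEq n] [DecidableEq p]
    (A : Matrix m n ℝ) (B : Matrix n p ℝ) :
    specNorm (A * B) ≤ specNorm A * specNorm B := by
  apply ContinuousLinearMap.opNorm_le_bound _
    (mul_nonneg (specNorm_nonneg A) (specNorm_nonneg B))
  intro x
  have h1 : Matrix.toEuclideanLin (A * B) x
      = Matrix.toEuclideanLin A (Matrix.toEuclideanLin B x) := by
    simp [Matrix.toEuclideanLin_apply, Matrix.mulVec_mulVec]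
  show ‖Matrix.toEuclideanLin (A * B) x‖ ≤ _
  rw [h1]
  calc ‖Matrix.toEuclideanLin A (Matrix.toEuclideanLin B x)‖
      ≤ specNorm A * ‖Matrix.toEuclideanLin B x‖ := norm_toEuclideanLin_le _ _
    _ ≤ specNorm A * (specNorm B * ‖x‖) := by
        exact mul_le_mul_of_nonneg_left (norm_toEuclideanLin_le _ _) (specNorm_nonneg A)
    _ = specNorm A * specNorm B * ‖x‖ := by ring

lemma specNorm_one_le {n : Type*} [Fintype n] [DecidableEq n] :
    specNorm (1 : Matrix n n ℝ) ≤ 1 := by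
  apply ContinuousLinearMap.opNorm_le_bound _ zero_le_one
  intro x
  have : Matrix.toEuclideanLin (1 : Matrix n n ℝ) x = x := by
    simp [Matrix.toEuclideanLin_apply]
  show ‖Matrix.toEuclideanLin (1 : Matrix n n ℝ) x‖ ≤ _
  rw [this, one_mul]

lemma specNorm_pow_le {n : Type*} [Fintype n] [DecidableEq n]
    (A : Matrix n n ℝ) (j : ℕ) : specNorm (A ^ j) ≤ specNorm A ^ j := by
  induction j with
  | zero => simpa [pow_zero] using specNorm_one_le (n := n)
  | succ j ih =>
    rw [pow_succ, pow_succ]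
    calc specNorm (A ^ j * A) ≤ specNorm (A ^ j) * specNorm A := specNorm_mul_le _ _
      _ ≤ specNorm A ^ j * specNorm A :=
        mul_le_mul_of_nonneg_right ih (specNorm_nonneg A)

lemma sumsq_lin_le {m n : Type*} [Fintype m] [Fintype n] [DecidableEq n]
    (N : Matrix m n ℝ) (v : EuclideanSpace ℝ n) :
    ∑ i, (Matrix.toEuclideanLin N v i) ^ 2 ≤ specNorm N ^ 2 * ∑ p, v p ^ 2 := by
  have h1 : ∑ i, (Matrix.toEuclideanLin N v i) ^ 2 = ‖Matrix.toEuclideanLin N v‖ ^ 2 :=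
    (eucl_norm_sq _).symm
  have h2 : ∑ p, v p ^ 2 = ‖v‖ ^ 2 := (eucl_norm_sq _).symm
  rw [h1, h2, ← mul_pow]
  exact pow_le_pow_left₀ (norm_nonneg _) (norm_toEuclideanLin_le N v) 2

lemma trace_conj_le {m n : Type*} [Fintype m] [Fintype n] [DecidableEq n]
    (N : Matrix m n ℝ) (B : Matrix n n ℝ) (hB : B.PosSemidef) :
    Matrix.trace (N * B * Nᵀ) ≤ specNorm N ^ 2 * Matrix.trace B := by
  obtain ⟨C, hC⟩ : ∃ C : Matrix n n ℝ, B = Cᴴ * C := by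
    open scoped MatrixOrder in
    classical
    exact ⟨CFC.sqrt B, by
      show B = star (CFC.sqrt B) * CFC.sqrt B
      rw [(CFC.sqrt_nonneg B).isSelfAdjoint.star_eq, CFC.sqrt_mul_sqrt_self B hB.nonneg]⟩
  have hC' : B = Cᵀ * C := by rw [hC]; rfl
  have em : N * B * Nᵀ = (N * Cᵀ) * (N * Cᵀ)ᵀ := by
    rw [hC', Matrix.transpose_mul, Matrix.transpose_transpose, ← Matrix.mul_assoc,
      ← Matrix.mul_assoc, Matrix.mul_assoc (N * Cᵀ)]
  have e1 : Matrix.trace (N * B * Nᵀ) = ∑ j, ∑ i, ((N * Cᵀ) i j) ^ 2 := by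
    rw [em]
    simp only [Matrix.trace, Matrix.diag, Matrix.mul_apply, Matrix.transpose_apply, sq]
    exact Finset.sum_comm
  have e2 : Matrix.trace B = ∑ j, ∑ l, (C j l) ^ 2 := by
    rw [hC']
    simp only [Matrix.trace, Matrix.diag, Matrix.mul_apply, Matrix.transpose_apply, sq]
    exact Finset.sum_comm
  rw [e1, e2, Finset.mul_sum]
  apply Finset.sum_le_sum
  intro j _
  have h := sumsq_lin_le N ((WithLp.equiv 2 (n → ℝ)).symm (fun l => C j l))
  have hl : ∀ i, Matrix.toEuclideanLin N ((WithLp.equiv 2 (n → ℝ)).symm (fun l => C j l)) i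
      = (N * Cᵀ) i j := by
    intro i
    rw [toEuclideanLin_apply']
    simp [Matrix.mul_apply, Matrix.transpose_apply]
  calc ∑ i, ((N * Cᵀ) i j) ^ 2
      = ∑ i, (Matrix.toEuclideanLin N
          ((WithLp.equiv 2 (n → ℝ)).symm (fun l => C j l)) i) ^ 2 := by
        simp only [hl]
    _ ≤ specNorm N ^ 2 * ∑ p, ((WithLp.equiv 2 (n → ℝ)).symm (fun l => C j l)) p ^ 2 := h
    _ = specNorm N ^ 2 * ∑ l, (C j l) ^ 2 := rfl

lemma cvar_key {ι κ : Type*} [Fintype ι] [Fintype κ] (ε : ℝ) (hε : ε ∈ Set.Ioo (0:ℝ) 1)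
    (P : Measure (EuclideanSpace ℝ ι)) [IsProbabilityMeasure P]
    (c : EuclideanSpace ℝ κ) (F : EuclideanSpace ℝ ι → EuclideanSpace ℝ κ) (r : ℝ)
    (hL : Integrable (fun w => ‖c + F w‖ ^ 2 - r ^ 2) P)
    (hF2 : Integrable (fun w => ‖F w‖ ^ 2) P)
    (hsum : ‖c‖ + Real.sqrt (ε⁻¹ * ∫ w, ‖F w‖ ^ 2 ∂P) ≤ r) :
    CVaR ε P (fun w => ‖c + F w‖ ^ 2 - r ^ 2) ≤ 0 := by
  obtain ⟨hε0, hε1⟩ := hε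
  obtain ⟨T, hTdef⟩ : ∃ T, (∫ w, ‖F w‖ ^ 2 ∂P) = T := ⟨_, rfl⟩
  obtain ⟨g, hgdef⟩ : ∃ g, ‖c‖ = g := ⟨_, rfl⟩
  have hT0 : 0 ≤ T := hTdef ▸ integral_nonneg (fun w => by positivity)
  have hg0 : 0 ≤ g := hgdef ▸ norm_nonneg _
  obtain ⟨W, hWdef⟩ : ∃ W, Real.sqrt (ε⁻¹ * T) = W := ⟨_, rfl⟩
  have hW0 : 0 ≤ W := hWdef ▸ Real.sqrt_nonneg _
  have hW2 : W ^ 2 = ε⁻¹ * T := by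
    rw [← hWdef]; exact Real.sq_sqrt (mul_nonneg (inv_nonneg.mpr hε0.le) hT0)
  have hgW : g + W ≤ r := by rw [← hgdef, ← hWdef]; rw [hTdef] at hsum; exact hsum
  have hεinv1 : (1:ℝ) ≤ ε⁻¹ := by
    have := mul_inv_cancel₀ (ne_of_gt hε0)
    nlinarith
  have hεinv0 : (0:ℝ) ≤ ε⁻¹ := inv_nonneg.mpr hε0.le
  have hr0 : 0 ≤ r := le_trans (by linarith) hgW
  set L : EuclideanSpace ℝ ι → ℝ := fun w => ‖c + F w‖ ^ 2 - r ^ 2 with hLdef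
  have hbdd : BddBelow (Set.range fun b => b + ε⁻¹ * ∫ ξ, max (L ξ - b) 0 ∂P) := by
    refine ⟨∫ w, L w ∂P, ?_⟩
    rintro _ ⟨b, rfl⟩
    have hLb : Integrable (fun w => L w - b) P := hL.sub (integrable_const b)
    have hmax : Integrable (fun w => max (L w - b) 0) P := hLb.pos_part
    have h1 : ∫ w, (L w - b) ∂P ≤ ∫ w, max (L w - b) 0 ∂P :=
      integral_mono hLb hmax (fun w => le_max_left _ _)
    have h2 : ∫ w, (L w - b) ∂P = (∫ w, L w ∂P) - b := by
      rw [integral_sub hL (integrable_const b), integral_const]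
      simp [measure_univ]
    have h3 : (0:ℝ) ≤ ∫ w, max (L w - b) 0 ∂P :=
      integral_nonneg (fun w => le_max_right _ _)
    have h4 : ∫ w, max (L w - b) 0 ∂P ≤ ε⁻¹ * ∫ w, max (L w - b) 0 ∂P :=
      le_mul_of_one_le_left h3 hεinv1
    show ∫ w, L w ∂P ≤ _
    dsimp only
    linarith [h1, h2.symm.le]
  show (⨅ b : ℝ, (b + ε⁻¹ * ∫ ξ, max (L ξ - b) 0 ∂P)) ≤ 0
  apply le_of_forall_pos_le_add
  intro η hη
  obtain ⟨u, hudef⟩ : ∃ u, g ^ 2 + g * W + η = u := ⟨_, rfl⟩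
  have hdpos : 0 < u - g ^ 2 := by nlinarith [mul_nonneg hg0 hW0]
  have hu_pos : 0 < u := by nlinarith
  obtain ⟨β, hβdef⟩ : ∃ β : ℝ, u - r ^ 2 = β := ⟨_, rfl⟩
  refine ciInf_le_of_le hbdd β ?_
  have hpt : ∀ w, max (L w - β) 0 ≤ u / (u - g ^ 2) * ‖F w‖ ^ 2 := by
    intro w
    obtain ⟨t, htdef⟩ : ∃ t, ‖c + F w‖ = t := ⟨_, rfl⟩
    obtain ⟨mw, hmwdef⟩ : ∃ mw, ‖F w‖ = mw := ⟨_, rfl⟩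
    have ht0 : 0 ≤ t := htdef ▸ norm_nonneg _
    have hmw0 : 0 ≤ mw := hmwdef ▸ norm_nonneg _
    have ht1 : t ≤ g + mw := by
      rw [← htdef, ← hgdef, ← hmwdef]; exact norm_add_le _ _
    have ht2 : g ≤ t + mw := by
      rw [← htdef, ← hgdef, ← hmwdef]
      have e : c = (c + F w) - F w := by abel
      calc ‖c‖ = ‖(c + F w) - F w‖ := by rw [← e]
        _ ≤ ‖c + F w‖ + ‖F w‖ := norm_sub_le _ _
    have h1 : L w = t ^ 2 - r ^ 2 := by rw [hLdef, ← htdef]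
    rw [h1, hmwdef]
    have hRHS0 : 0 ≤ u / (u - g ^ 2) * mw ^ 2 :=
      mul_nonneg (div_nonneg hu_pos.le hdpos.le) (sq_nonneg _)
    have hβ' : t ^ 2 - r ^ 2 - β = t ^ 2 - u := by rw [← hβdef]; ring
    rw [hβ']
    rcases le_or_gt (t ^ 2) u with hcase | hcase
    · exact max_le (by linarith) hRHS0
    · rw [max_eq_left (by linarith)]
      rw [div_mul_eq_mul_div, le_div_iff₀ hdpos]
      have htg : g < t := by nlinarith
      have key1 : (t - g) ^ 2 ≤ mw ^ 2 := by nlinarith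
      nlinarith [sq_nonneg (t * g - u), mul_le_mul_of_nonneg_left key1 hu_pos.le]
  have hmaxβ : Integrable (fun w => max (L w - β) 0) P :=
    (hL.sub (integrable_const β)).pos_part
  have hint : ∫ w, max (L w - β) 0 ∂P ≤ u / (u - g ^ 2) * T := by
    calc ∫ w, max (L w - β) 0 ∂P
        ≤ ∫ w, u / (u - g ^ 2) * ‖F w‖ ^ 2 ∂P :=
          integral_mono hmaxβ (hF2.const_mul _) hpt
      _ = u / (u - g ^ 2) * T := by rw [integral_const_mul, hTdef]
  have hfβ : β + ε⁻¹ * ∫ ξ, max (L ξ - β) 0 ∂P ≤ β + ε⁻¹ * (u / (u - g ^ 2) * T) := by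
    have := mul_le_mul_of_nonneg_left hint hεinv0
    linarith
  refine le_trans hfβ ?_
  have he : ε⁻¹ * (u / (u - g ^ 2) * T) = u * W ^ 2 / (g * W + η) := by
    rw [hW2]
    have h2 : u - g ^ 2 = g * W + η := by rw [← hudef]; ring
    rw [h2]; ring
  rw [he]
  have hgWη : (0:ℝ) < g * W + η := by nlinarith [mul_nonneg hg0 hW0]
  have hdiv : u * W ^ 2 / (g * W + η) ≤ g * W + W ^ 2 := by
    rw [div_le_iff₀ hgWη]
    nlinarith [mul_nonneg (mul_nonneg hg0 hW0) hη.le]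
  have hsq : (g + W) ^ 2 ≤ r ^ 2 := by nlinarith
  have : β + (g * W + W ^ 2) ≤ 0 + η := by rw [← hβdef, ← hudef]; nlinarith
  linarith

section moments
variable {ι κ : Type*} [Fintype ι] [Fintype κ] [DecidableEq ι]
  (P : Measure (EuclideanSpace ℝ ι)) [IsProbabilityMeasure P]
  (H : Matrix κ ι ℝ)
  (hint1 : ∀ p, Integrable (fun ξ : EuclideanSpace ℝ ι => ξ p) P)
  (hint2 : ∀ p q, Integrable (fun ξ : EuclideanSpace ℝ ι => ξ p * ξ q) P)

lemma sq_lin_eq : (fun w : EuclideanSpace ℝ ι => ‖Matrix.toEuclideanLin H w‖ ^ 2)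
    = fun w => ∑ i, ∑ p, ∑ q, (H i p * H i q) * (w p * w q) := by
  funext w
  rw [eucl_norm_sq]
  refine Finset.sum_congr rfl fun i _ => ?_
  rw [toEuclideanLin_apply', sq, Finset.sum_mul_sum]
  exact Finset.sum_congr rfl fun p _ => Finset.sum_congr rfl fun q _ => by ring

omit [IsProbabilityMeasure P] in
include hint2 in
lemma integrable_lin_sq :
    Integrable (fun w : EuclideanSpace ℝ ι => ‖Matrix.toEuclideanLin H w‖ ^ 2) P := by
  rw [sq_lin_eq]
  exact integrable_finset_sum _ fun i _ => integrable_finset_sum _ fun p _ =>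
    integrable_finset_sum _ fun q _ => (hint2 p q).const_mul _

omit [IsProbabilityMeasure P] in
include hint2 in
lemma integral_lin_sq (S : Matrix ι ι ℝ)
    (hcov : ∀ p q, ∫ ξ, ξ p * ξ q ∂P = S p q) :
    ∫ w, ‖Matrix.toEuclideanLin H w‖ ^ 2 ∂P
      = ∑ i, ∑ p, ∑ q, (H i p * H i q) * S p q := by
  rw [sq_lin_eq]
  rw [integral_finset_sum _ fun i _ => integrable_finset_sum _ fun p _ =>
    integrable_finset_sum _ fun q _ => (hint2 p q).const_mul _]
  refine Finset.sum_congr rfl fun i _ => ?_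
  rw [integral_finset_sum _ fun p _ => integrable_finset_sum _ fun q _ =>
    (hint2 p q).const_mul _]
  refine Finset.sum_congr rfl fun p _ => ?_
  rw [integral_finset_sum _ fun q _ => (hint2 p q).const_mul _]
  refine Finset.sum_congr rfl fun q _ => ?_
  rw [MeasureTheory.integral_const_mul, hcov]

include hint1 hint2 in
lemma integrable_loss (c : EuclideanSpace ℝ κ) (r : ℝ) :
    Integrable (fun w : EuclideanSpace ℝ ι =>
      ‖c + Matrix.toEuclideanLin H w‖ ^ 2 - r ^ 2) P := by
  have key : (fun w : EuclideanSpace ℝ ι => ‖c + Matrix.toEuclideanLin H w‖ ^ 2 - r ^ 2)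
      = fun w => ((∑ i, (c i ^ 2)) + (∑ i, 2 * c i * ∑ p, H i p * w p)
          + ‖Matrix.toEuclideanLin H w‖ ^ 2) - r ^ 2 := by
    funext w
    rw [eucl_norm_sq, eucl_norm_sq]
    congr 1
    rw [← Finset.sum_add_distrib, ← Finset.sum_add_distrib]
    refine Finset.sum_congr rfl fun i _ => ?_
    have hadd : (c + Matrix.toEuclideanLin H w) i = c i + Matrix.toEuclideanLin H w i := rfl
    rw [hadd, toEuclideanLin_apply']
    ring
  rw [key]
  apply Integrable.sub _ (integrable_const _)
  apply Integrable.add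
  apply Integrable.add (integrable_const _)
  · exact integrable_finset_sum _ fun i _ => (integrable_finset_sum _ fun p _ =>
      (hint1 p).const_mul _).const_mul _
  · exact integrable_lin_sq P H hint2
end moments

lemma trace_psd_nonneg {n : Type*} [Fintype n] {B : Matrix n n ℝ}
    (hB : B.PosSemidef) : 0 ≤ Matrix.trace B := by
  obtain ⟨C, hC⟩ : ∃ C : Matrix n n ℝ, B = Cᴴ * C := by
    open scoped MatrixOrder in
    classical
    exact ⟨CFC.sqrt B, by
      show B = star (CFC.sqrt B) * CFC.sqrt B
      rw [(CFC.sqrt_nonneg B).isSelfAdjoint.star_eq, CFC.sqrt_mul_sqrt_self B hB.nonneg]⟩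
  have hC' : B = Cᵀ * C := hC
  rw [hC']
  have : Matrix.trace (Cᵀ * C) = ∑ l, ∑ j, (C j l) ^ 2 := by
    simp only [Matrix.trace, Matrix.diag, Matrix.mul_apply, Matrix.transpose_apply, sq]
  rw [this]
  positivity

lemma sum_eq_trace {κ n : Type*} [Fintype κ] [Fintype n]
    (M : Matrix κ n ℝ) (B : Matrix n n ℝ) :
    ∑ i, ∑ b, ∑ b', (M i b * M i b') * B b b' = Matrix.trace (M * B * Mᵀ) := by
  simp only [Matrix.trace, Matrix.diag, Matrix.mul_apply, Matrix.transpose_apply,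
    Finset.sum_mul]
  refine Finset.sum_congr rfl fun i _ => ?_
  rw [Finset.sum_comm]
  refine Finset.sum_congr rfl fun b' _ => Finset.sum_congr rfl fun b _ => by ring

lemma T0_le {nx nw : ℕ} (A : Matrix (Fin nx) (Fin nx) ℝ) (E : Matrix (Fin nx) (Fin nw) ℝ)
    (Sw : Matrix (Fin nw) (Fin nw) ℝ) (hSw : Sw.PosSemidef) (k : ℕ) (hk : 1 ≤ k) :
    ∑ i, ∑ p, ∑ q, (Hmat A E k i p * Hmat A E k i q) * ((1 : Matrix (Fin k) (Fin k) ℝ) ⊗ₖ Sw) p q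
      ≤ (∑ j ∈ Finset.range k, specNorm A ^ j) ^ 2 * Matrix.trace (Sw * Eᵀ * E) := by
  have hτeq : Matrix.trace (E * Sw * Eᵀ) = Matrix.trace (Sw * Eᵀ * E) :=
    (Matrix.trace_mul_cycle Sw Eᵀ E).symm
  have hPSD : (E * Sw * Eᵀ).PosSemidef := hSw.mul_mul_conjTranspose_same E
  have hτ0 : 0 ≤ Matrix.trace (Sw * Eᵀ * E) := hτeq ▸ trace_psd_nonneg hPSD
  have hρ0 : 0 ≤ specNorm A := specNorm_nonneg A
  have hS10 : 0 ≤ ∑ j ∈ Finset.range k, specNorm A ^ j :=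
    Finset.sum_nonneg fun j _ => pow_nonneg hρ0 j
  calc ∑ i, ∑ p, ∑ q, (Hmat A E k i p * Hmat A E k i q) *
          ((1 : Matrix (Fin k) (Fin k) ℝ) ⊗ₖ Sw) p q
      = ∑ i, ∑ a : Fin k, ∑ b, ∑ b',
          (Hmat A E k i (a, b) * Hmat A E k i (a, b')) * Sw b b' := by
        refine Finset.sum_congr rfl fun i _ => ?_
        rw [Fintype.sum_prod_type]
        refine Finset.sum_congr rfl fun a _ => Finset.sum_congr rfl fun b _ => ?_
        rw [Fintype.sum_prod_type_right]
        refine Finset.sum_congr rfl fun b' _ => ?_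
        simp [Matrix.kroneckerMap_apply, Matrix.one_apply, ite_mul, mul_ite,
          Finset.sum_ite_eq]
    _ = ∑ a : Fin k, ∑ i, ∑ b, ∑ b',
          ((A ^ (k - 1 - (a:ℕ)) * E) i b * (A ^ (k - 1 - (a:ℕ)) * E) i b') * Sw b b' := by
        rw [Finset.sum_comm]
        simp only [Hmat, Matrix.of_apply]
    _ = ∑ a : Fin k, Matrix.trace
          ((A ^ (k - 1 - (a:ℕ)) * E) * Sw * (A ^ (k - 1 - (a:ℕ)) * E)ᵀ) :=
        Finset.sum_congr rfl fun a _ => sum_eq_trace _ _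
    _ ≤ ∑ a : Fin k, (specNorm A ^ (k - 1 - (a:ℕ))) ^ 2 * Matrix.trace (Sw * Eᵀ * E) := by
        refine Finset.sum_le_sum fun a _ => ?_
        have hmm : (A ^ (k - 1 - (a:ℕ)) * E) * Sw * (A ^ (k - 1 - (a:ℕ)) * E)ᵀ
            = A ^ (k - 1 - (a:ℕ)) * (E * Sw * Eᵀ) * (A ^ (k - 1 - (a:ℕ)))ᵀ := by
          rw [Matrix.transpose_mul]
          simp only [Matrix.mul_assoc]
        rw [hmm, ← hτeq]
        calc Matrix.trace (A ^ (k - 1 - (a:ℕ)) * (E * Sw * Eᵀ) * (A ^ (k - 1 - (a:ℕ)))ᵀ)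
            ≤ specNorm (A ^ (k - 1 - (a:ℕ))) ^ 2 * Matrix.trace (E * Sw * Eᵀ) :=
              trace_conj_le _ _ hPSD
          _ ≤ (specNorm A ^ (k - 1 - (a:ℕ))) ^ 2 * Matrix.trace (E * Sw * Eᵀ) := by
              apply mul_le_mul_of_nonneg_right _ (hτeq ▸ hτ0)
              exact pow_le_pow_left₀ (specNorm_nonneg _) (specNorm_pow_le A _) 2
    _ ≤ (∑ j ∈ Finset.range k, specNorm A ^ j) ^ 2 * Matrix.trace (Sw * Eᵀ * E) := by
        rw [← Finset.sum_mul]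
        apply mul_le_mul_of_nonneg_right _ hτ0
        calc ∑ a : Fin k, (specNorm A ^ (k - 1 - (a:ℕ))) ^ 2
            = ∑ j ∈ Finset.range k, (specNorm A ^ (k - 1 - j)) ^ 2 :=
              Fin.sum_univ_eq_sum_range (fun j => (specNorm A ^ (k - 1 - j)) ^ 2) k
          _ ≤ ∑ j ∈ Finset.range k, specNorm A ^ (k - 1 - j) *
                (∑ l ∈ Finset.range k, specNorm A ^ l) := by
              refine Finset.sum_le_sum fun j hj => ?_
              rw [sq]
              apply mul_le_mul_of_nonneg_left _ (pow_nonneg hρ0 _)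
              refine Finset.single_le_sum (f := fun l => specNorm A ^ l)
                (fun l _ => pow_nonneg hρ0 l) ?_
              rw [Finset.mem_range]
              omega
          _ = (∑ j ∈ Finset.range k, specNorm A ^ (k - 1 - j)) *
                (∑ l ∈ Finset.range k, specNorm A ^ l) := by rw [Finset.sum_mul]
          _ = (∑ j ∈ Finset.range k, specNorm A ^ j) ^ 2 := by
              rw [Finset.sum_range_reflect (fun j => specNorm A ^ j) k, sq]

/-- Theorem 4: worst-case CVaR robust positively invariant set for
`x_{t+1} = A x_t + D v_t + E w_t` with `‖v_t‖ ≤ d`. -/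
theorem stmt16 {nx nv nw : ℕ} (ε : ℝ) (hε : ε ∈ Set.Ioo (0 : ℝ) 1)
    (A : Matrix (Fin nx) (Fin nx) ℝ) (D : Matrix (Fin nx) (Fin nv) ℝ)
    (E : Matrix (Fin nx) (Fin nw) ℝ) (Sw : Matrix (Fin nw) (Fin nw) ℝ)
    (hA : specNorm A < 1) (hSw : Sw.PosSemidef)
    (d : ℝ) (r : ℝ) (hr : 0 < r)
    (hr2 : ((1 - specNorm A) ^ 2)⁻¹ *
      (specNorm D * d + Real.sqrt (ε⁻¹ * Matrix.trace (Sw * Eᵀ * E))) ^ 2 ≤ r ^ 2) :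
    ∀ x : EuclideanSpace ℝ (Fin nx), ‖x‖ ^ 2 ≤ r ^ 2 → ∀ k : ℕ, 1 ≤ k →
      ∀ v : ℕ → EuclideanSpace ℝ (Fin nv), (∀ τ, ‖v τ‖ ≤ d) →
      wcCVaR ε ((1 : Matrix (Fin k) (Fin k) ℝ) ⊗ₖ Sw)
        (fun w => ‖Matrix.toEuclideanLin (A ^ k) x +
          (∑ j ∈ Finset.range k, Matrix.toEuclideanLin (A ^ j * D) (v (k - 1 - j))) +
          Matrix.toEuclideanLin (Hmat A E k) w‖ ^ 2 - r ^ 2) ≤ 0 := by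
  intro x hx k hk v hv
  obtain ⟨hε0, hε1⟩ := hε
  have hεinv0 : (0:ℝ) ≤ ε⁻¹ := inv_nonneg.mpr hε0.le
  have hρ0 : 0 ≤ specNorm A := specNorm_nonneg A
  have hd0 : 0 ≤ d := le_trans (norm_nonneg (v 0)) (hv 0)
  have hτeq : Matrix.trace (E * Sw * Eᵀ) = Matrix.trace (Sw * Eᵀ * E) :=
    (Matrix.trace_mul_cycle Sw Eᵀ E).symm
  have hτ0 : 0 ≤ Matrix.trace (Sw * Eᵀ * E) :=
    hτeq ▸ trace_psd_nonneg (hSw.mul_mul_conjTranspose_same E)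
  have hS10 : 0 ≤ ∑ j ∈ Finset.range k, specNorm A ^ j :=
    Finset.sum_nonneg fun j _ => pow_nonneg hρ0 j
  have hB0 : 0 ≤ specNorm D * d + Real.sqrt (ε⁻¹ * Matrix.trace (Sw * Eᵀ * E)) :=
    add_nonneg (mul_nonneg (specNorm_nonneg D) hd0) (Real.sqrt_nonneg _)
  have h1ρ : (0:ℝ) < 1 - specNorm A := by linarith
  have hBr : specNorm D * d + Real.sqrt (ε⁻¹ * Matrix.trace (Sw * Eᵀ * E))
      ≤ (1 - specNorm A) * r := by
    have hne : ((1 - specNorm A) ^ 2 : ℝ) ≠ 0 := by positivity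
    have h1 : (specNorm D * d + Real.sqrt (ε⁻¹ * Matrix.trace (Sw * Eᵀ * E))) ^ 2
        ≤ (1 - specNorm A) ^ 2 * r ^ 2 := by
      have h2 := mul_le_mul_of_nonneg_left hr2 (sq_nonneg (1 - specNorm A))
      rwa [← mul_assoc, mul_inv_cancel₀ hne, one_mul] at h2
    calc specNorm D * d + Real.sqrt (ε⁻¹ * Matrix.trace (Sw * Eᵀ * E))
        = Real.sqrt ((specNorm D * d
            + Real.sqrt (ε⁻¹ * Matrix.trace (Sw * Eᵀ * E))) ^ 2) :=
          (Real.sqrt_sq hB0).symm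
      _ ≤ Real.sqrt (((1 - specNorm A) * r) ^ 2) :=
          Real.sqrt_le_sqrt (by rw [mul_pow]; exact h1)
      _ = (1 - specNorm A) * r := Real.sqrt_sq (by positivity)
  have hxr : ‖x‖ ≤ r := by nlinarith [norm_nonneg x]
  have hgeom : (∑ j ∈ Finset.range k, specNorm A ^ j) * (1 - specNorm A)
      = 1 - specNorm A ^ k := by
    linear_combination (-1 : ℝ) * geom_sum_mul (specNorm A) k
  apply Real.iSup_le _ le_rfl
  rintro ⟨P, hprob, hint1, hmean, hint2, hcov⟩
  haveI := hprob
  have hTeq : ∫ w, ‖Matrix.toEuclideanLin (Hmat A E k) w‖ ^ 2 ∂P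
      = ∑ i, ∑ p, ∑ q, (Hmat A E k i p * Hmat A E k i q)
          * ((1 : Matrix (Fin k) (Fin k) ℝ) ⊗ₖ Sw) p q :=
    integral_lin_sq P (Hmat A E k) hint2 _ hcov
  have hT0le := T0_le A E Sw hSw k hk
  have hsqrt : Real.sqrt (ε⁻¹ * ∫ w, ‖Matrix.toEuclideanLin (Hmat A E k) w‖ ^ 2 ∂P)
      ≤ (∑ j ∈ Finset.range k, specNorm A ^ j)
          * Real.sqrt (ε⁻¹ * Matrix.trace (Sw * Eᵀ * E)) := by
    rw [hTeq]
    calc Real.sqrt (ε⁻¹ * ∑ i, ∑ p, ∑ q, (Hmat A E k i p * Hmat A E k i q)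
            * ((1 : Matrix (Fin k) (Fin k) ℝ) ⊗ₖ Sw) p q)
        ≤ Real.sqrt (ε⁻¹ * ((∑ j ∈ Finset.range k, specNorm A ^ j) ^ 2
            * Matrix.trace (Sw * Eᵀ * E))) :=
          Real.sqrt_le_sqrt (mul_le_mul_of_nonneg_left hT0le hεinv0)
      _ = Real.sqrt ((∑ j ∈ Finset.range k, specNorm A ^ j) ^ 2
            * (ε⁻¹ * Matrix.trace (Sw * Eᵀ * E))) := by congr 1; ring
      _ = (∑ j ∈ Finset.range k, specNorm A ^ j)
            * Real.sqrt (ε⁻¹ * Matrix.trace (Sw * Eᵀ * E)) := by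
          rw [Real.sqrt_mul (sq_nonneg _), Real.sqrt_sq hS10]
  have hc : ‖Matrix.toEuclideanLin (A ^ k) x +
        ∑ j ∈ Finset.range k, Matrix.toEuclideanLin (A ^ j * D) (v (k - 1 - j))‖
      ≤ specNorm A ^ k * r
          + (∑ j ∈ Finset.range k, specNorm A ^ j) * (specNorm D * d) := by
    calc ‖Matrix.toEuclideanLin (A ^ k) x +
          ∑ j ∈ Finset.range k, Matrix.toEuclideanLin (A ^ j * D) (v (k - 1 - j))‖
        ≤ ‖Matrix.toEuclideanLin (A ^ k) x‖
            + ‖∑ j ∈ Finset.range k, Matrix.toEuclideanLin (A ^ j * D) (v (k - 1 - j))‖ :=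
          norm_add_le _ _
      _ ≤ specNorm (A ^ k) * ‖x‖
            + ∑ j ∈ Finset.range k, ‖Matrix.toEuclideanLin (A ^ j * D) (v (k - 1 - j))‖ :=
          add_le_add (norm_toEuclideanLin_le _ _) (norm_sum_le _ _)
      _ ≤ specNorm A ^ k * r
            + ∑ j ∈ Finset.range k, specNorm A ^ j * (specNorm D * d) := by
          refine add_le_add
            (mul_le_mul (specNorm_pow_le A k) hxr (norm_nonneg x) (pow_nonneg hρ0 k))
            (Finset.sum_le_sum fun j _ => ?_)
          calc ‖Matrix.toEuclideanLin (A ^ j * D) (v (k - 1 - j))‖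
              ≤ specNorm (A ^ j * D) * ‖v (k - 1 - j)‖ := norm_toEuclideanLin_le _ _
            _ ≤ specNorm (A ^ j) * specNorm D * d :=
                mul_le_mul (specNorm_mul_le _ _) (hv _) (norm_nonneg _)
                  (mul_nonneg (specNorm_nonneg _) (specNorm_nonneg _))
            _ ≤ specNorm A ^ j * specNorm D * d := by
                apply mul_le_mul_of_nonneg_right _ hd0
                exact mul_le_mul_of_nonneg_right (specNorm_pow_le A j) (specNorm_nonneg D)
            _ = specNorm A ^ j * (specNorm D * d) := by ring
      _ = specNorm A ^ k * r
            + (∑ j ∈ Finset.range k, specNorm A ^ j) * (specNorm D * d) := by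
          rw [← Finset.sum_mul]
  have hρk1 : specNorm A ^ k ≤ 1 := pow_le_one₀ hρ0 hA.le
  have hsum : ‖Matrix.toEuclideanLin (A ^ k) x +
        ∑ j ∈ Finset.range k, Matrix.toEuclideanLin (A ^ j * D) (v (k - 1 - j))‖
      + Real.sqrt (ε⁻¹ * ∫ w, ‖Matrix.toEuclideanLin (Hmat A E k) w‖ ^ 2 ∂P) ≤ r := by
    have hS1B := mul_le_mul_of_nonneg_left hBr hS10
    nlinarith [hc, hsqrt, hS1B, hgeom]
  exact cvar_key ε ⟨hε0, hε1⟩ P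
    (Matrix.toEuclideanLin (A ^ k) x +
      ∑ j ∈ Finset.range k, Matrix.toEuclideanLin (A ^ j * D) (v (k - 1 - j)))
    (fun w => Matrix.toEuclideanLin (Hmat A E k) w) r
    (integrable_loss P (Hmat A E k) hint1 hint2 _ r)
    (integrable_lin_sq P (Hmat A E k) hint2)
    hsum
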